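/- Let D ≥ 2, n ≥ 1, 1 ≤ r ≤ n, r ≤ k ≤ 2n. Let m_1, …, m_r be nonzero elements of ℤ_D, set M = diag(m_1,…,m_r), and let Z₁ (r×r), Z₂ ((k−r)×r), Z₃ (r×(n−r)), Z₄ ((k−r)×(n−r)) be matrices over ℤ_D. Define k Pauli products g_1, …, g_k on n qudits by: for 1 ≤ i ≤ r, g_i = X^{m_i e_i} Z^{(i-th row of (Z₁|Z₃))}; for r < i ≤ k, g_i = Z^{((i−r)-th row of (Z₂|Z₄))}. Then g_1, …, g_k pairwise commute if and only if Z₁ M = M Z₁ᵀ mod D and Z₂ M = 0 mod D. -/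

import Mathlib

open Matrix

/-- ω = exp(2πi/D), a primitive D-th root of unity. -/
noncomputable def omegaD (D : ℕ) : ℂ := Complex.exp (2 * Real.pi * Complex.I / D)

/-- The single-qudit Pauli operator Z = Σ_j ω^j |j⟩⟨j| on ℂ^D. -/
noncomputable def Zmat (D : ℕ) : Matrix (ZMod D) (ZMod D) ℂ :=
  Matrix.of fun j k => if k = j then omegaD D ^ j.val else 0

/-- The single-qudit Pauli operator X = Σ_j |j⟩⟨j+1| on ℂ^D (index arithmetic mod D). -/
noncomputable def Xmat (D : ℕ) : Matrix (ZMod D) (ZMod D) ℂ :=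
  Matrix.of fun j k => if k = j + 1 then (1 : ℂ) else 0

/-- The n-fold Kronecker product X^x Z^z = (X^{x_1}Z^{z_1}) ⊗ ⋯ ⊗ (X^{x_n}Z^{z_n}),
written entrywise on the index set (Fin n → ZMod D) ≃ (ZMod D)^n of size D^n. -/
noncomputable def XZ (D n : ℕ) [NeZero D] (x z : Fin n → ZMod D) :
    Matrix (Fin n → ZMod D) (Fin n → ZMod D) ℂ :=
  Matrix.of fun j k => ∏ i, (Xmat D ^ (x i).val * Zmat D ^ (z i).val) (j i) (k i)

/-- A Pauli product ω^λ X^x Z^z on n qudits. -/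
def IsPauli (D n : ℕ) [NeZero D] (M : Matrix (Fin n → ZMod D) (Fin n → ZMod D) ℂ) : Prop :=
  ∃ (lam : ZMod D) (x z : Fin n → ZMod D), M = omegaD D ^ lam.val • XZ D n x z

lemma omegaD_prim (D : ℕ) [NeZero D] : IsPrimitiveRoot (omegaD D) D :=
  Complex.isPrimitiveRoot_exp D (NeZero.ne D)

lemma omega_pow_eq_iff (D : ℕ) [NeZero D] (a b : ℕ) :
    omegaD D ^ a = omegaD D ^ b ↔ (a : ZMod D) = b := by
  have key : ∀ c : ℕ, omegaD D ^ c = omegaD D ^ (c % D) := by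
    intro c
    conv_lhs => rw [← Nat.mod_add_div c D]
    rw [pow_add, pow_mul, (omegaD_prim D).pow_eq_one, one_pow, mul_one]
  rw [key a, key b, ZMod.natCast_eq_natCast_iff]
  constructor
  · intro h
    have := (omegaD_prim D).pow_inj (Nat.mod_lt _ (NeZero.pos D)) (Nat.mod_lt _ (NeZero.pos D)) h
    simpa [Nat.ModEq] using this
  · intro h
    have : a % D = b % D := h
    rw [this]

lemma Zpow_apply (D : ℕ) [NeZero D] (b : ℕ) (j k : ZMod D) :
    (Zmat D ^ b) j k = if k = j then omegaD D ^ (j.val * b) else 0 := by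
  induction b generalizing k with
  | zero => simp [Matrix.one_apply, eq_comm]
  | succ b ih =>
    rw [pow_succ, Matrix.mul_apply]
    simp only [ih]
    simp only [Zmat, Matrix.of_apply]
    simp only [ite_mul, zero_mul]
    rw [Finset.sum_ite_eq' Finset.univ j]
    simp only [Finset.mem_univ, if_true, mul_ite, mul_zero]
    split_ifs with h
    · rw [← pow_add]; ring_nf
    · rfl

lemma Xpow_apply (D : ℕ) [NeZero D] (a : ℕ) (j k : ZMod D) :
    (Xmat D ^ a) j k = if k = j + a then 1 else 0 := by
  induction a generalizing k with
  | zero => simp [Matrix.one_apply, eq_comm]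
  | succ a ih =>
    rw [pow_succ, Matrix.mul_apply]
    simp only [ih]
    simp only [Xmat, Matrix.of_apply]
    simp only [ite_mul, zero_mul, one_mul]
    rw [Finset.sum_ite_eq' Finset.univ ((j : ZMod D) + a)]
    simp only [Finset.mem_univ, if_true, Nat.cast_add, Nat.cast_one, add_assoc, mul_ite,
      mul_zero, mul_one]

lemma XZsingle (D : ℕ) [NeZero D] (a b : ℕ) (j k : ZMod D) :
    (Xmat D ^ a * Zmat D ^ b) j k = if k = j + a then omegaD D ^ (k.val * b) else 0 := by
  rw [Matrix.mul_apply]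
  simp only [Xpow_apply, Zpow_apply, ite_mul, zero_mul, one_mul]
  rw [Finset.sum_ite_eq' Finset.univ ((j : ZMod D) + a)]
  simp only [Finset.mem_univ, if_true]
  split_ifs with h
  · rw [h]
  · rfl

lemma XZ_apply (D n : ℕ) [NeZero D] (x z : Fin n → ZMod D) (j k : Fin n → ZMod D) :
    XZ D n x z j k = if k = j + x then omegaD D ^ (∑ i, (k i).val * (z i).val) else 0 := by
  have hfac : ∀ i, (Xmat D ^ (x i).val * Zmat D ^ (z i).val) (j i) (k i)
      = if k i = j i + x i then omegaD D ^ ((k i).val * (z i).val) else 0 := by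
    intro i
    rw [XZsingle]
    simp [ZMod.natCast_val, ZMod.cast_id]
  show (∏ i, (Xmat D ^ (x i).val * Zmat D ^ (z i).val) (j i) (k i)) = _
  simp_rw [hfac]
  by_cases h : k = j + x
  · rw [if_pos h]
    have hki : ∀ i, k i = j i + x i := fun i => by rw [h]; rfl
    simp only [hki, if_true]
    rw [Finset.prod_pow_eq_pow_sum]
  · rw [if_neg h]
    obtain ⟨i, hi⟩ : ∃ i, k i ≠ j i + x i := by
      by_contra hc
      push_neg at hc
      exact h (funext hc)
    exact Finset.prod_eq_zero (Finset.mem_univ i) (if_neg hi)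

lemma XZ_mul_apply (D n : ℕ) [NeZero D] (x z x' z' : Fin n → ZMod D) (j k : Fin n → ZMod D) :
    (XZ D n x z * XZ D n x' z') j k =
      if k = j + x + x' then
        omegaD D ^ ((∑ i, (j i + x i).val * (z i).val) + ∑ i, (k i).val * (z' i).val)
      else 0 := by
  rw [Matrix.mul_apply]
  simp_rw [XZ_apply]
  simp only [ite_mul, zero_mul]
  rw [Finset.sum_ite_eq' Finset.univ (j + x)]
  simp only [Finset.mem_univ, if_true, mul_ite, mul_zero, Pi.add_apply]
  rw [pow_add]

lemma XZ_comm_iff (D n : ℕ) [NeZero D] (x z x' z' : Fin n → ZMod D) :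
    XZ D n x z * XZ D n x' z' = XZ D n x' z' * XZ D n x z ↔
      (∑ i, x i * z' i) = ∑ i, z i * x' i := by
  constructor
  · intro h
    have h0 := congrFun (congrFun h 0) (0 + x + x')
    rw [XZ_mul_apply, XZ_mul_apply, if_pos rfl,
      if_pos (by rw [add_assoc, add_assoc, add_comm x x'])] at h0
    rw [omega_pow_eq_iff] at h0
    push_cast [ZMod.natCast_val, ZMod.cast_id] at h0
    simp only [Pi.add_apply, Pi.zero_apply, zero_add] at h0
    have h0' : (∑ i, x i * z i) + ∑ i, (x i + x' i) * z' i
        = (∑ i, x' i * z' i) + ∑ i, (x i + x' i) * z i := h0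
    simp only [add_mul, Finset.sum_add_distrib] at h0'
    have hc : ∀ u v : Fin n → ZMod D, (∑ i, u i * v i) = ∑ i, v i * u i := by
      intro u v; exact Finset.sum_congr rfl fun i _ => mul_comm _ _
    rw [hc z x']
    linear_combination h0'
  · intro h
    funext j k
    rw [XZ_mul_apply, XZ_mul_apply]
    by_cases hk : k = j + x + x'
    · rw [if_pos hk, if_pos (by rw [hk, add_assoc, add_assoc, add_comm x x'])]
      rw [omega_pow_eq_iff]
      push_cast [ZMod.natCast_val, ZMod.cast_id]
      have hkk : ∀ i, k i = j i + x i + x' i := fun i => by rw [hk]; rfl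
      simp only [hkk]
      simp only [add_mul, Finset.sum_add_distrib]
      have hc : (∑ i, z i * x' i) = ∑ i, x' i * z i :=
        Finset.sum_congr rfl fun i _ => mul_comm _ _
      rw [hc] at h
      linear_combination h
    · rw [if_neg hk, if_neg (fun hc => hk (by rw [hc, add_assoc, add_assoc, add_comm x' x]))]

/-- Commutation of standard-form generators: the Pauli products g₁,…,g_k with X-block
(M | 0), M = diag(m₁,…,m_r), and Z-block (Z₁ Z₃ ; Z₂ Z₄) pairwise commute if and only
if Z₁M = MZ₁ᵀ mod D and Z₂M = 0 mod D. -/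
theorem stmt_15 (D n k r : ℕ) [NeZero D] (hD : 2 ≤ D) (hn : 1 ≤ n)
    (hr1 : 1 ≤ r) (hrn : r ≤ n) (hrk : r ≤ k) (hk : k ≤ 2 * n)
    (m : ℕ → ZMod D) (hm : ∀ i < r, m i ≠ 0)
    (zv : Fin k → Fin n → ZMod D)
    (g : Fin k → Matrix (Fin n → ZMod D) (Fin n → ZMod D) ℂ)
    (hg : ∀ i : Fin k, g i =
      XZ D n (fun j => if i.val < r ∧ j.val = i.val then m i.val else 0) (zv i)) :
    (∀ i i' : Fin k, g i * g i' = g i' * g i) ↔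
      ((∀ (a b : ℕ) (ha : a < r) (hb : b < r),
          zv ⟨a, lt_of_lt_of_le ha hrk⟩ ⟨b, lt_of_lt_of_le hb hrn⟩ * m b =
            m a * zv ⟨b, lt_of_lt_of_le hb hrk⟩ ⟨a, lt_of_lt_of_le ha hrn⟩) ∧
        (∀ (i : Fin k), r ≤ i.val → ∀ (b : ℕ) (hb : b < r),
          zv i ⟨b, lt_of_lt_of_le hb hrn⟩ * m b = 0)) := by
  have hsum1 : ∀ (i i' : Fin k),
      (∑ j : Fin n, (if i.val < r ∧ j.val = i.val then m i.val else 0) * zv i' j)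
        = if h : i.val < r then m i.val * zv i' ⟨i.val, lt_of_lt_of_le h hrn⟩ else 0 := by
    intro i i'
    by_cases h : i.val < r
    · rw [dif_pos h]
      rw [Finset.sum_eq_single (⟨i.val, lt_of_lt_of_le h hrn⟩ : Fin n)]
      · rw [if_pos ⟨h, rfl⟩]
      · intro j _ hj
        rw [if_neg, zero_mul]
        rintro ⟨-, hji⟩
        exact hj (Fin.ext hji)
      · intro habs; exact absurd (Finset.mem_univ _) habs
    · rw [dif_neg h]
      apply Finset.sum_eq_zero
      intro j _
      rw [if_neg (fun hc => h hc.1), zero_mul]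
  have hsum2 : ∀ (i i' : Fin k),
      (∑ j : Fin n, zv i j * (if i'.val < r ∧ j.val = i'.val then m i'.val else 0))
        = if h : i'.val < r then zv i ⟨i'.val, lt_of_lt_of_le h hrn⟩ * m i'.val else 0 := by
    intro i i'
    by_cases h : i'.val < r
    · rw [dif_pos h]
      rw [Finset.sum_eq_single (⟨i'.val, lt_of_lt_of_le h hrn⟩ : Fin n)]
      · rw [if_pos ⟨h, rfl⟩]
      · intro j _ hj
        rw [if_neg, mul_zero]
        rintro ⟨-, hji⟩
        exact hj (Fin.ext hji)
      · intro habs; exact absurd (Finset.mem_univ _) habs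
    · rw [dif_neg h]
      apply Finset.sum_eq_zero
      intro j _
      rw [if_neg (fun hc => h hc.1), mul_zero]
  have key : (∀ i i' : Fin k, g i * g i' = g i' * g i) ↔
      ∀ i i' : Fin k,
        (if h : i.val < r then m i.val * zv i' ⟨i.val, lt_of_lt_of_le h hrn⟩ else 0)
          = if h : i'.val < r then zv i ⟨i'.val, lt_of_lt_of_le h hrn⟩ * m i'.val else 0 := by
    apply forall₂_congr
    intro i i'
    rw [hg i, hg i', XZ_comm_iff, hsum1 i i', hsum2 i i']
  rw [key]
  constructor
  · intro H
    constructor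
    · intro a b ha hb
      have := H ⟨a, lt_of_lt_of_le ha hrk⟩ ⟨b, lt_of_lt_of_le hb hrk⟩
      rw [dif_pos ha, dif_pos hb] at this
      exact this.symm
    · intro i hi b hb
      have := H ⟨b, lt_of_lt_of_le hb hrk⟩ i
      rw [dif_pos hb, dif_neg (Nat.not_lt.mpr hi)] at this
      rw [mul_comm]
      exact this
  · rintro ⟨h1, h2⟩ i i'
    by_cases hi : i.val < r <;> by_cases hi' : i'.val < r
    · rw [dif_pos hi, dif_pos hi']
      have := h1 i.val i'.val hi hi'
      simp only [Fin.eta] at this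
      exact this.symm
    · rw [dif_pos hi, dif_neg hi']
      have := h2 i' (Nat.not_lt.mp hi') i.val hi
      try simp only [Fin.eta] at this
      rw [mul_comm]
      exact this
    · rw [dif_neg hi, dif_pos hi']
      have := h2 i (Nat.not_lt.mp hi) i'.val hi'
      try simp only [Fin.eta] at this
      exact this.symm
    · rw [dif_neg hi, dif_neg hi']
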